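/- For all integers n ≥ 3 and k ≥ 1, φ̃(n^k) < φ̃(n^{k+1}). -/
import Mathlib


/-- φ̃(n): number of m with 1 ≤ m ≤ n, gcd(m,n)=1, m not prime. -/
def phiT (n : ℕ) : ℕ :=
  ((Finset.Icc 1 n).filter (fun m => Nat.gcd m n = 1 ∧ ¬ m.Prime)).card

/-- The product of the first k primes. -/
noncomputable def primorialN (k : ℕ) : ℕ := ∏ i ∈ Finset.range k, Nat.nth Nat.Prime i

lemma phiT_pow_eq (n j : ℕ) (hj : 1 ≤ j) :
    phiT (n ^ j) =
      ((Finset.Icc 1 (n ^ j)).filter (fun m => Nat.gcd m n = 1 ∧ ¬ m.Prime)).card := by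
  unfold phiT
  congr 1
  apply Finset.filter_congr
  intro m _
  have : Nat.Coprime m (n ^ j) ↔ Nat.Coprime m n :=
    Nat.coprime_pow_right_iff (by omega) m n
  simp only [Nat.Coprime] at this
  simp [this]

theorem stmt3 (n k : ℕ) (hn : 3 ≤ n) (hk : 1 ≤ k) :
    phiT (n ^ k) < phiT (n ^ (k + 1)) := by
  rw [phiT_pow_eq n k hk, phiT_pow_eq n (k + 1) (by omega)]
  apply Finset.card_lt_card
  constructor
  · apply Finset.filter_subset_filter _
    apply Finset.Icc_subset_Icc le_rfl
    exact Nat.pow_le_pow_right (by omega) (by omega)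
  · intro hsub
    set m := n ^ (k + 1) - 1 with hm
    have hnk1 : n ^ k < n ^ (k + 1) := Nat.pow_lt_pow_right (by omega) (by omega)
    have hnk : 3 ≤ n ^ k := by
      have h := Nat.pow_le_pow_right (show 1 ≤ n by omega) hk
      rw [pow_one] at h; omega
    have hmlt : n ^ k < m := by
      have h7 : 3 * n ^ k ≤ n ^ (k + 1) := by
        rw [pow_succ]; nlinarith [hnk]
      omega
    -- m has the property
    have hcop : Nat.gcd m n = 1 := by
      have h1 : Nat.gcd m n ∣ n ^ (k + 1) :=
        dvd_trans (Nat.gcd_dvd_right m n) (dvd_pow_self n (by omega))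
      have h2 : Nat.gcd m n ∣ m := Nat.gcd_dvd_left m n
      have h3 : Nat.gcd m n ∣ n ^ (k + 1) - m := Nat.dvd_sub h1 h2
      have h4 : n ^ (k + 1) - m = 1 := by omega
      exact Nat.dvd_one.mp (h4 ▸ h3)
    have hnp : ¬ m.Prime := by
      intro hp
      have hdvd : (n - 1) ∣ m := by
        have := Nat.sub_dvd_pow_sub_pow n 1 (k + 1)
        simpa using this
      have := (Nat.Prime.eq_one_or_self_of_dvd hp (n - 1) hdvd)
      have hlt : n - 1 < m := by
        have h5 : n ^ 2 ≤ n ^ (k + 1) := Nat.pow_le_pow_right (by omega) (by omega)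
        have h6 : n < n ^ 2 := by nlinarith
        omega
      omega
    have hmem : m ∈ (Finset.Icc 1 (n ^ (k + 1))).filter
        (fun m => Nat.gcd m n = 1 ∧ ¬ m.Prime) := by
      simp only [Finset.mem_filter, Finset.mem_Icc]
      exact ⟨⟨by omega, by omega⟩, hcop, hnp⟩
    have := hsub hmem
    simp only [Finset.mem_filter, Finset.mem_Icc] at this
    omega
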